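/- For the type-(−) localized kink excitation Ψ⁻ₙ(x,m) (with m_α = -J for α ≤ x-2, m_{x-1} = -J+n, m_x = m-n, m_α = J for α ≥ x+1), the Ising kink energy is E₋(m,n) = n² + (J−m)n. -/

import Mathlib

/-- `J` is a positive half-integer: `J ∈ (1/2)ℕ`, `J > 0`. -/
def IsHalfInt (J : ℝ) : Prop := ∃ k : ℕ, 0 < k ∧ J = k / 2

/-- `m` is an allowed spin value for spin `J`: `m ∈ {-J, -J+1, …, J}`. -/
def IsSpinVal (J m : ℝ) : Prop := |m| ≤ J ∧ ∃ k : ℤ, m = -J + k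

/-- The type-(−) localized kink excitation `Ψ⁻ₙ(x,m)` has Ising kink
energy `E₋(m,n) = n² + (J−m)n`. -/
theorem stmt9 (J : ℝ) (hJ : IsHalfInt J) (L x n : ℤ) (hL : 2 ≤ L) (m : ℝ)
    (hm : IsSpinVal J m) (hx : x ∈ Finset.Icc (-L + 1) (L - 1))
    (hn1 : 1 ≤ n) (hn2 : (n : ℝ) ≤ J + m)
    (c : ℤ → ℝ)
    (hc : ∀ α : ℤ, c α = if α ≤ x - 2 then -J
      else if α = x - 1 then -J + n else if α = x then m - n else J) :
    (∑ α ∈ Finset.Icc (-L) (L - 1), (J + c α) * (J - c (α + 1)))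
      = (n : ℝ) ^ 2 + (J - m) * n := by
  simp only [Finset.mem_Icc] at hx
  have hx1 : x - 1 ∈ Finset.Icc (-L) (L - 1) := by
    simp only [Finset.mem_Icc]; omega
  rw [Finset.sum_eq_single_of_mem (x - 1) hx1]
  · rw [hc (x - 1), hc (x - 1 + 1)]
    rw [if_neg (by omega), if_pos rfl, if_neg (by omega), if_neg (by omega),
      if_pos (by omega)]
    ring
  · intro b _ hne
    by_cases hb1 : b ≤ x - 2
    · rw [hc b, if_pos hb1]; ring
    · rw [hc (b + 1), if_neg (by omega), if_neg (by omega), if_neg (by omega)]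
      ring
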